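/- The Gaschütz product of two formations is again a formation: if 𝔊 and 𝔉 are formations of finite groups, then 𝔊 ∘ 𝔉 := { G finite | G^𝔉 ∈ 𝔊 } is closed under quotients and under subdirect products. -/
import Mathlib


/-- A class of groups: a property of groups. -/
def GroupClass : Type 1 := ∀ (G : Type) [Group G], Prop

/-- `N` is a normal subgroup of `G` whose quotient belongs to the class `F`. -/
def QuotInClass (F : GroupClass) {G : Type} [Group G] (N : Subgroup G) : Prop :=
  ∃ _h : N.Normal, F (G ⧸ N)

/-- The `F`-residual of `G`: the intersection of all normal subgroups `N` of `G`
with `G ⧸ N ∈ F`. -/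
def classResidual (F : GroupClass) (G : Type) [Group G] : Subgroup G :=
  sInf {N : Subgroup G | QuotInClass F N}

/-- `F` is a formation: a nonempty isomorphism-closed class of finite groups closed
under quotients and under subdirect products. -/
def IsFormation (F : GroupClass) : Prop :=
  F PUnit ∧
  (∀ (G : Type) [Group G], F G → Finite G) ∧
  (∀ (G H : Type) [Group G] [Group H], (G ≃* H) → F G → F H) ∧
  (∀ (G : Type) [Group G] (N : Subgroup G) (_ : N.Normal), F G → F (G ⧸ N)) ∧
  (∀ (G : Type) [Group G] (N₁ N₂ : Subgroup G) (_ : N₁.Normal) (_ : N₂.Normal),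
    N₁ ⊓ N₂ = ⊥ → F (G ⧸ N₁) → F (G ⧸ N₂) → F G)

/-- The Gaschütz product `𝔊 ∘ 𝔉 = { G finite | G^𝔉 ∈ 𝔊 }`. -/
def GaschutzProd (Gc F : GroupClass) : GroupClass := fun G _ =>
  Finite G ∧ Gc (classResidual F G)

/-! ### Auxiliary lemmas -/

lemma classResidual_normal (F : GroupClass) (G : Type) [Group G] :
    (classResidual F G).Normal := by
  constructor
  intro n hn g
  rw [classResidual, Subgroup.mem_sInf] at hn ⊢
  intro N hN
  exact hN.choose.conj_mem n (hn N hN) g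

lemma quotInClass_top {F : GroupClass} (hF : IsFormation F) (G : Type) [Group G] :
    QuotInClass F (⊤ : Subgroup G) := by
  refine ⟨inferInstance, ?_⟩
  haveI : Subsingleton (G ⧸ (⊤ : Subgroup G)) := QuotientGroup.subsingleton_quotient_top
  have e : PUnit ≃* (G ⧸ (⊤ : Subgroup G)) :=
    { toFun := fun _ => 1
      invFun := fun _ => PUnit.unit
      left_inv := fun _ => rfl
      right_inv := fun x => Subsingleton.elim _ _
      map_mul' := fun _ _ => (one_mul 1).symm }
  exact hF.2.2.1 PUnit _ e hF.1

lemma quotInClass_inf {F : GroupClass} (hF : IsFormation F) {G : Type} [Group G]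
    {N₁ N₂ : Subgroup G} (h1 : QuotInClass F N₁) (h2 : QuotInClass F N₂) :
    QuotInClass F (N₁ ⊓ N₂) := by
  obtain ⟨n1, f1⟩ := h1
  obtain ⟨n2, f2⟩ := h2
  haveI := n1; haveI := n2
  haveI nInf : (N₁ ⊓ N₂).Normal := inferInstance
  refine ⟨nInf, ?_⟩
  set π : G →* G ⧸ (N₁ ⊓ N₂) := QuotientGroup.mk' (N₁ ⊓ N₂) with hπ
  haveI m1 : (N₁.map π).Normal := n1.map π (QuotientGroup.mk'_surjective _)
  haveI m2 : (N₂.map π).Normal := n2.map π (QuotientGroup.mk'_surjective _)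
  have hbot : N₁.map π ⊓ N₂.map π = ⊥ := by
    rw [eq_bot_iff]
    rintro x ⟨hx1, hx2⟩
    obtain ⟨a, ha, rfl⟩ := hx1
    obtain ⟨b, hb, hab⟩ := hx2
    have hker : a * b⁻¹ ∈ N₁ ⊓ N₂ := by
      rw [← QuotientGroup.ker_mk' (N₁ ⊓ N₂), MonoidHom.mem_ker, map_mul, map_inv, hab,
        mul_inv_cancel]
    have haN2 : a ∈ N₂ := by
      have : (a * b⁻¹) * b ∈ N₂ := N₂.mul_mem hker.2 hb
      simpa using this
    have hmem : a ∈ N₁ ⊓ N₂ := ⟨ha, haN2⟩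
    have : π a = 1 := (QuotientGroup.eq_one_iff a).mpr hmem
    simp [this, Subgroup.mem_bot]
  have e1 : (G ⧸ (N₁ ⊓ N₂)) ⧸ (N₁.map π) ≃* G ⧸ N₁ :=
    QuotientGroup.quotientQuotientEquivQuotient (N₁ ⊓ N₂) N₁ inf_le_left
  have e2 : (G ⧸ (N₁ ⊓ N₂)) ⧸ (N₂.map π) ≃* G ⧸ N₂ :=
    QuotientGroup.quotientQuotientEquivQuotient (N₁ ⊓ N₂) N₂ inf_le_right
  exact hF.2.2.2.2 _ (N₁.map π) (N₂.map π) m1 m2 hbot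
    (hF.2.2.1 _ _ e1.symm f1) (hF.2.2.1 _ _ e2.symm f2)

lemma residual_quotInClass {F : GroupClass} (hF : IsFormation F) (G : Type) [Group G]
    [Finite G] : QuotInClass F (classResidual F G) := by
  haveI : Finite (Subgroup G) :=
    Finite.of_injective (fun N => (N : Set G)) SetLike.coe_injective
  haveI : WellFoundedLT (Subgroup G) := Finite.to_wellFoundedLT
  set S := {N : Subgroup G | QuotInClass F N} with hS
  have hne : S.Nonempty := ⟨⊤, quotInClass_top hF G⟩
  obtain ⟨N, hN, hmin⟩ := (wellFounded_lt (α := Subgroup G)).has_min S hne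
  have hres : classResidual F G = N := by
    refine le_antisymm (sInf_le hN) (le_sInf ?_)
    intro M hM
    have hNM : N ⊓ M ∈ S := quotInClass_inf hF hN hM
    have heq : N ⊓ M = N := by
      rcases lt_or_eq_of_le (inf_le_left : N ⊓ M ≤ N) with h | h
      · exact absurd h (hmin _ hNM)
      · exact h
    calc N = N ⊓ M := heq.symm
      _ ≤ M := inf_le_right
  rw [classResidual] at hres
  rw [classResidual, hres]
  exact hN

/-- The residual of a quotient is the image of the residual. -/
lemma residual_map {F : GroupClass} (hF : IsFormation F) (G : Type) [Group G] [Finite G]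
    (N : Subgroup G) (hN : N.Normal) :
    classResidual F (G ⧸ N) = (classResidual F G).map (QuotientGroup.mk' N) := by
  haveI := hN
  set π : G →* G ⧸ N := QuotientGroup.mk' N with hπ
  set R := classResidual F G with hR
  haveI hRn : R.Normal := classResidual_normal F G
  have hFR := (residual_quotInClass hF G).choose_spec
  refine le_antisymm ?_ ?_
  · -- classResidual F (G ⧸ N) ≤ R.map π
    haveI hmapn : (R.map π).Normal := hRn.map π (QuotientGroup.mk'_surjective _)
    refine sInf_le ⟨hmapn, ?_⟩
    haveI hsupn : (N ⊔ R).Normal := inferInstance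
    have hmapeq : (N ⊔ R).map π = R.map π := by
      rw [Subgroup.map_sup]
      have : N.map π = ⊥ := by
        rw [Subgroup.map_eq_bot_iff, QuotientGroup.ker_mk']
      rw [this, bot_sup_eq]
    have e1 : (G ⧸ N) ⧸ ((N ⊔ R).map π) ≃* G ⧸ (N ⊔ R) :=
      QuotientGroup.quotientQuotientEquivQuotient N (N ⊔ R) le_sup_left
    haveI : ((N ⊔ R).map (QuotientGroup.mk' R)).Normal :=
      hsupn.map _ (QuotientGroup.mk'_surjective _)
    have e2 : (G ⧸ R) ⧸ ((N ⊔ R).map (QuotientGroup.mk' R)) ≃* G ⧸ (N ⊔ R) :=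
      QuotientGroup.quotientQuotientEquivQuotient R (N ⊔ R) le_sup_right
    have hFsup : F (G ⧸ (N ⊔ R)) :=
      hF.2.2.1 _ _ e2 (hF.2.2.2.1 _ _ inferInstance hFR)
    have h4 : F ((G ⧸ N) ⧸ ((N ⊔ R).map π)) := hF.2.2.1 _ _ e1.symm hFsup
    exact hF.2.2.1 _ _ (QuotientGroup.quotientMulEquivOfEq hmapeq) h4
  · -- R.map π ≤ classResidual F (G ⧸ N)
    set T := classResidual F (G ⧸ N) with hT
    haveI hTn : T.Normal := classResidual_normal F (G ⧸ N)
    rw [Subgroup.map_le_iff_le_comap]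
    haveI hcn : (T.comap π).Normal := hTn.comap π
    refine sInf_le ⟨hcn, ?_⟩
    have hNle : N ≤ T.comap π := by
      intro x hx
      have h1 : π x = 1 := (QuotientGroup.eq_one_iff x).mpr hx
      rw [Subgroup.mem_comap, h1]
      exact T.one_mem
    have e3 : (G ⧸ N) ⧸ ((T.comap π).map π) ≃* G ⧸ (T.comap π) :=
      QuotientGroup.quotientQuotientEquivQuotient N (T.comap π) hNle
    have hTc : (T.comap π).map π = T :=
      Subgroup.map_comap_eq_self_of_surjective (QuotientGroup.mk'_surjective _) T
    have hFT := (residual_quotInClass hF (G ⧸ N)).choose_spec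
    haveI : ((T.comap π).map π).Normal := hcn.map π (QuotientGroup.mk'_surjective _)
    have h5 : F ((G ⧸ N) ⧸ ((T.comap π).map π)) :=
      hF.2.2.1 _ _ (QuotientGroup.quotientMulEquivOfEq hTc.symm) hFT
    exact hF.2.2.1 _ _ e3 h5

/-- The Gaschütz product of two formations is closed under quotients and under
subdirect products. -/
theorem gaschutzProd_closed (Gc F : GroupClass)
    (hG : IsFormation Gc) (hF : IsFormation F) :
    (∀ (G : Type) [Group G] (N : Subgroup G) (_ : N.Normal),
      GaschutzProd Gc F G → GaschutzProd Gc F (G ⧸ N)) ∧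
    (∀ (G : Type) [Group G] [Finite G] (N₁ N₂ : Subgroup G)
      (_ : N₁.Normal) (_ : N₂.Normal), N₁ ⊓ N₂ = ⊥ →
      GaschutzProd Gc F (G ⧸ N₁) → GaschutzProd Gc F (G ⧸ N₂) →
      GaschutzProd Gc F G) := by
  constructor
  · -- quotient closure
    intro G _ N hN hGF
    obtain ⟨hfin, hGc⟩ := hGF
    haveI := hfin
    haveI := hN
    set R := classResidual F G with hR
    set π : G →* G ⧸ N := QuotientGroup.mk' N with hπ
    refine ⟨inferInstance, ?_⟩
    rw [residual_map hF G N hN]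
    set ψ : ↥R →* G ⧸ N := π.comp R.subtype with hψ
    have hrange : ψ.range = R.map π := by
      rw [hψ, MonoidHom.range_comp, Subgroup.range_subtype]
    have e : ↥R ⧸ ψ.ker ≃* ↥(R.map π) :=
      (QuotientGroup.quotientKerEquivRange ψ).trans (MulEquiv.subgroupCongr hrange)
    exact hG.2.2.1 _ _ e (hG.2.2.2.1 _ ψ.ker inferInstance hGc)
  · -- subdirect product closure
    intro G _ _ N₁ N₂ hn1 hn2 hbot h1 h2
    haveI := hn1; haveI := hn2
    have hGc1 := h1.2
    have hGc2 := h2.2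
    set R := classResidual F G with hR
    rw [residual_map hF G N₁ hn1] at hGc1
    rw [residual_map hF G N₂ hn2] at hGc2
    refine ⟨inferInstance, ?_⟩
    set ψ₁ : ↥R →* G ⧸ N₁ := (QuotientGroup.mk' N₁).comp R.subtype with hψ1
    set ψ₂ : ↥R →* G ⧸ N₂ := (QuotientGroup.mk' N₂).comp R.subtype with hψ2
    have hrange1 : ψ₁.range = R.map (QuotientGroup.mk' N₁) := by
      rw [hψ1, MonoidHom.range_comp, Subgroup.range_subtype]
    have hrange2 : ψ₂.range = R.map (QuotientGroup.mk' N₂) := by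
      rw [hψ2, MonoidHom.range_comp, Subgroup.range_subtype]
    have e1 : ↥R ⧸ ψ₁.ker ≃* ↥(R.map (QuotientGroup.mk' N₁)) :=
      (QuotientGroup.quotientKerEquivRange ψ₁).trans (MulEquiv.subgroupCongr hrange1)
    have e2 : ↥R ⧸ ψ₂.ker ≃* ↥(R.map (QuotientGroup.mk' N₂)) :=
      (QuotientGroup.quotientKerEquivRange ψ₂).trans (MulEquiv.subgroupCongr hrange2)
    have hker1 : ψ₁.ker = N₁.comap R.subtype := by
      rw [hψ1, ← MonoidHom.comap_ker, QuotientGroup.ker_mk']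
    have hker2 : ψ₂.ker = N₂.comap R.subtype := by
      rw [hψ2, ← MonoidHom.comap_ker, QuotientGroup.ker_mk']
    have hkbot : ψ₁.ker ⊓ ψ₂.ker = ⊥ := by
      rw [hker1, hker2, ← Subgroup.comap_inf, hbot]
      rw [← Subgroup.ker_subtype R]
      rfl
    have hGcR : Gc ↥R :=
      hG.2.2.2.2 _ ψ₁.ker ψ₂.ker inferInstance inferInstance hkbot
        (hG.2.2.1 _ _ e1.symm hGc1) (hG.2.2.1 _ _ e2.symm hGc2)
    exact hGcR
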